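/- For every integer n ≥ 1 and every real t > n, setting q = t − n (so 0 < q ≤ t), one has G_n(t) ≤ (2πn)^{−1/2}·exp(−q²/(2t)). -/

import Mathlib

open Real

/-- The Poisson weights `G_n(t) = tⁿ e^{-t}/n!` for `n ≥ 0`, and `0` for `n < 0`. -/
noncomputable def PoissonG (n : ℤ) (t : ℝ) : ℝ :=
  if 0 ≤ n then t ^ n.toNat * Real.exp (-t) / (n.toNat.factorial : ℝ) else 0

lemma aux_log_le (u : ℝ) (hu : 1 ≤ u) : Real.log u ≤ u/2 - 1/(2*u) := by
  set f : ℝ → ℝ := fun x => x/2 - 1/(2*x) - Real.log x with hf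
  have hmono : MonotoneOn f (Set.Ici (1:ℝ)) := by
    apply monotoneOn_of_hasDerivWithinAt_nonneg (f' := fun x => (x-1)^2/(2*x^2))
      (convex_Ici 1)
    · apply ContinuousOn.sub
      apply ContinuousOn.sub
      · exact (continuous_id.div_const 2).continuousOn
      · apply ContinuousOn.div continuousOn_const
        · exact (continuous_const.mul continuous_id).continuousOn
        · intro x hx
          have : (1:ℝ) ≤ x := hx
          positivity
      · intro x hx
        have hx1 : (1:ℝ) ≤ x := hx
        exact (Real.continuousAt_log (by positivity)).continuousWithinAt
    · intro x hx
      rw [interior_Ici] at hx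
      have hx1 : (1:ℝ) < x := hx
      have hx0 : x ≠ 0 := by positivity
      have h1 : HasDerivAt (fun x : ℝ => x/2) (1/2) x := (hasDerivAt_id x).div_const 2
      have h2 : HasDerivAt (fun x : ℝ => 1/(2*x)) (-(2)/(2*x)^2) x := by
        have := ((hasDerivAt_id x).const_mul 2).inv (by positivity)
        exact (this.congr_deriv (by simp)).congr_of_eventuallyEq (Filter.Eventually.of_forall fun y => by simp)
      have h3 : HasDerivAt Real.log x⁻¹ x := Real.hasDerivAt_log hx0
      have := (h1.sub h2).sub h3
      have heq : 1/2 - -(2)/(2*x)^2 - x⁻¹ = (x-1)^2/(2*x^2) := by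
        field_simp
        ring
      rw [heq] at this
      exact this.hasDerivWithinAt
    · intro x hx
      rw [interior_Ici] at hx
      have hx1 : (1:ℝ) < x := hx
      positivity
  have h := hmono (Set.self_mem_Ici) (Set.mem_Ici.mpr hu) hu
  have hf1 : f 1 = 0 := by simp [hf]
  rw [hf1] at h
  have : 0 ≤ u/2 - 1/(2*u) - Real.log u := h
  linarith

lemma stirling_lower (n : ℕ) (hn : 1 ≤ n) :
    Real.sqrt (2*Real.pi*n) * (n/Real.exp 1)^n ≤ (n.factorial : ℝ) := by
  have hpi : Real.sqrt Real.pi ≤ Stirling.stirlingSeq n := by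
    obtain ⟨m, rfl⟩ := Nat.exists_eq_add_of_le hn
    have := Stirling.stirlingSeq'_antitone.le_of_tendsto
      (f := Stirling.stirlingSeq ∘ Nat.succ)
      (by
        have := Stirling.tendsto_stirlingSeq_sqrt_pi
        exact this.comp (Filter.tendsto_add_atTop_nat 1)) m
    simpa [Nat.succ_eq_add_one, Nat.add_comm] using this
  have hpos : 0 < Real.sqrt (2*n) * (n/Real.exp 1)^n := by
    have hn0 : 0 < (n:ℝ) := by exact_mod_cast hn
    positivity
  rw [Stirling.stirlingSeq, le_div_iff₀ hpos] at hpi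
  calc Real.sqrt (2*Real.pi*n) * (n/Real.exp 1)^n
      = Real.sqrt Real.pi * (Real.sqrt (2*n) * (n/Real.exp 1)^n) := by
        rw [show 2*Real.pi*(n:ℝ) = Real.pi * (2*n) by ring,
          Real.sqrt_mul Real.pi_nonneg, mul_assoc]
    _ ≤ _ := hpi

/-- Lemma 5 ii): if `q = t - n > 0`, `q ≤ t`, then
`G_n(t) ≤ (2πn)^{-1/2}·exp(-q²/(2t))`. -/
theorem stmt_12 :
    ∀ n : ℤ, 1 ≤ n → ∀ t : ℝ, (n:ℝ) < t →
    ∀ q : ℝ, q = t - (n:ℝ) →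
      PoissonG n t ≤ (1/Real.sqrt (2*Real.pi*(n:ℝ))) * Real.exp (-q^2/(2*t)) := by
  intro n hn t ht q hq
  set N : ℕ := n.toNat with hN
  have hn0 : (0:ℤ) ≤ n := by linarith
  have hNn : (N:ℝ) = (n:ℝ) := by
    rw [hN]
    exact_mod_cast congrArg (Int.cast : ℤ → ℝ) (Int.toNat_of_nonneg hn0)
  have hN1 : 1 ≤ N := by omega
  have hNpos : (0:ℝ) < (N:ℝ) := by exact_mod_cast hN1
  have htN : (N:ℝ) < t := by rwa [hNn]
  have htpos : (0:ℝ) < t := hNpos.trans htN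
  have hupos : (0:ℝ) < t/(N:ℝ) := by positivity
  have hu : (1:ℝ) ≤ t/(N:ℝ) := (one_le_div hNpos).mpr htN.le
  have hexp : Real.exp ((N:ℝ) * Real.log (t/(N:ℝ))) = (t/(N:ℝ))^N := by
    rw [Real.exp_nat_mul, Real.exp_log hupos]
  have hexpo : (N:ℝ) * Real.log (t/(N:ℝ)) + (N:ℝ) - t ≤ -q^2/(2*t) := by
    have h1 := aux_log_le (t/(N:ℝ)) hu
    have h2 : (N:ℝ) * Real.log (t/(N:ℝ)) ≤ (N:ℝ) * (t/(N:ℝ)/2 - 1/(2*(t/(N:ℝ)))) :=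
      mul_le_mul_of_nonneg_left h1 hNpos.le
    have h3 : (N:ℝ) * (t/(N:ℝ)/2 - 1/(2*(t/(N:ℝ)))) + (N:ℝ) - t = -q^2/(2*t) := by
      rw [hq, ← hNn]
      field_simp
      ring
    linarith
  have hS : (0:ℝ) < Real.sqrt (2*Real.pi*(N:ℝ)) := by
    apply Real.sqrt_pos.mpr; positivity
  have hPG : PoissonG n t = t^N * Real.exp (-t) / (N.factorial : ℝ) := by
    simp [PoissonG, hn0, hN]
  rw [hPG, ← hNn]
  calc t^N * Real.exp (-t) / (N.factorial : ℝ)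
      ≤ t^N * Real.exp (-t) / (Real.sqrt (2*Real.pi*(N:ℝ)) * ((N:ℝ)/Real.exp 1)^N) := by
        gcongr
        exact stirling_lower N hN1
    _ = (1/Real.sqrt (2*Real.pi*(N:ℝ))) *
        Real.exp ((N:ℝ) * Real.log (t/(N:ℝ)) + (N:ℝ) - t) := by
        rw [show (N:ℝ)*Real.log (t/(N:ℝ)) + (N:ℝ) - t
            = (N:ℝ)*Real.log (t/(N:ℝ)) + ((N:ℝ) + (-t)) by ring,
          Real.exp_add, Real.exp_add, hexp, div_pow, div_pow,
          show Real.exp 1 ^ N = Real.exp (N:ℝ) by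
            rw [← Real.exp_nat_mul, mul_one]]
        have hNN : ((N:ℝ))^N ≠ 0 := by positivity
        have he : Real.exp (-t) ≠ 0 := Real.exp_ne_zero _
        have heN : Real.exp ((N:ℝ)) ≠ 0 := Real.exp_ne_zero _
        field_simp
    _ ≤ (1/Real.sqrt (2*Real.pi*(N:ℝ))) * Real.exp (-q^2/(2*t)) := by
        have := Real.exp_le_exp.mpr hexpo
        gcongr
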